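/- arXiv:1403.2846 — 8 statements merged into one kernel-verified Lean document; each statement's English description precedes it below -/
import Mathlib

section
/- Let B be an n×n matrix over a field and J the n×n all-ones matrix. Then for any scalar x, det(B + x·J) = det(B) + x·sum(adj(B)), where sum(K) denotes the sum of all entries of K and adj(B) is the adjugate matrix of B. -/
open Matrix BigOperators

lemma sum_adjugate_eq {n : ℕ} {K : Type*} [Field K] (B : Matrix (Fin n) (Fin n) K) :
    ∑ i, ∑ j, B.adjugate i j = ∑ j, (B.updateRow j (fun _ => (1 : K))).det := by
  refine Finset.sum_comm.trans ?_
  refine Finset.sum_congr rfl fun j _ => ?_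
  simp_rw [Matrix.adjugate_apply]
  have := ((Matrix.detRowAlternating :
      (Fin n → K) [⋀^Fin n]→ₗ[K] K).toMultilinearMap.map_update_sum
      (Finset.univ) j (fun i => Pi.single i (1 : K)) B).symm
  simp [Matrix.updateRow, Finset.univ_sum_single] at this ⊢
  exact this

/-- For an `n × n` matrix `B` over a field and the all-ones matrix `J`,
`det (B + x • J) = det B + x * sum (adjugate B)`, where `sum` is the sum of all entries. -/
theorem det_add_smul_allOnes {n : ℕ} {K : Type*} [Field K]
    (B : Matrix (Fin n) (Fin n) K) (x : K) :
    (B + x • (Matrix.of fun _ _ => (1 : K))).det =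
      B.det + x * ∑ i, ∑ j, B.adjugate i j := by
  classical
  set J : Matrix (Fin n) (Fin n) K := Matrix.of fun _ _ => (1 : K) with hJ
  have hexp : (B + x • J).det =
      ∑ s : Finset (Fin n), Matrix.det (s.piecewise (x • J) B : Matrix (Fin n) (Fin n) K) := by
    rw [add_comm]
    exact (Matrix.detRowAlternating :
      (Fin n → K) [⋀^Fin n]→ₗ[K] K).toMultilinearMap.map_add_univ (x • J) B
  rw [hexp]
  have hzero : ∀ s ∈ (Finset.univ : Finset (Finset (Fin n))),
      s ∉ (Finset.univ : Finset (Finset (Fin n))).filter (fun s => s.card ≤ 1) →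
      Matrix.det (s.piecewise (x • J) B : Matrix (Fin n) (Fin n) K) = 0 := by
    intro s _ hs
    simp only [Finset.mem_filter, Finset.mem_univ, true_and, not_le,
      Finset.one_lt_card] at hs
    obtain ⟨a, ha, b, hb, hab⟩ := hs
    refine Matrix.det_zero_of_row_eq hab ?_
    erw [Finset.piecewise_eq_of_mem _ _ _ ha, Finset.piecewise_eq_of_mem _ _ _ hb]
    rfl
  rw [← Finset.sum_subset (Finset.filter_subset _ _) hzero]
  have hfilter : (Finset.univ : Finset (Finset (Fin n))).filter (fun s => s.card ≤ 1)
      = insert ∅ (Finset.univ.image fun i : Fin n => ({i} : Finset (Fin n))) := by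
    ext s
    simp only [Finset.mem_filter, Finset.mem_univ, true_and, Finset.mem_insert,
      Finset.mem_image, Nat.le_one_iff_eq_zero_or_eq_one, Finset.card_eq_zero,
      Finset.card_eq_one]
    aesop
  rw [hfilter, Finset.sum_insert (by simp), Finset.sum_image
    (fun a _ b _ h => Finset.singleton_injective h)]
  have hsing : ∀ i : Fin n,
      Matrix.det (({i} : Finset (Fin n)).piecewise (x • J) B : Matrix (Fin n) (Fin n) K)
      = x * (B.updateRow i (fun _ => (1 : K))).det := by
    intro i
    erw [Finset.piecewise_singleton]
    have : Function.update (B : Matrix (Fin n) (Fin n) K) i ((x • J) i)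
        = B.updateRow i (x • fun _ => (1 : K)) := by
      rfl
    rw [this, Matrix.det_updateRow_smul]
  simp only [hsing, ← Finset.mul_sum]
  erw [Finset.piecewise_empty]
  rw [sum_adjugate_eq]
end

section
/- Let G be a simple graph on n vertices and Q its signless Laplacian. Then the (i,j)-entry of Q^k equals the number of semi-edge walks of length k in G starting at vertex v_i and terminating at vertex v_j. -/
open Matrix BigOperators

/-- The signless Laplacian `Q(G) = D(G) + A(G)` of a simple graph. -/
def signlessLaplacian {V : Type*} [Fintype V] [DecidableEq V]
    (G : SimpleGraph V) [DecidableRel G.Adj] : Matrix V V ℝ :=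
  Matrix.diagonal (fun v => (G.degree v : ℝ)) + G.adjMatrix ℝ

/-- The number of semi-edge walks of length `k` in `G` from `i` to `j`.  A semi-edge
walk is an alternating sequence `v1, e1, v2, ..., vk, ek, v(k+1)` of vertices and edges
such that for each step both `vi` and `v(i+1)` are end-vertices (not necessarily
distinct) of the edge `ei`.  Hence a walk of length `k+1` starting at `i` chooses an
edge `e = {i, w}` incident with `i` (i.e. a neighbour `w` of `i`) and then a second
end-vertex of `e` — either `i` itself or `w` — from which a semi-edge walk of length
`k` to `j` continues. -/
def semiEdgeWalkCount {V : Type*} [Fintype V] [DecidableEq V]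
    (G : SimpleGraph V) [DecidableRel G.Adj] : ℕ → V → V → ℕ
  | 0, i, j => if i = j then 1 else 0
  | (k + 1), i, j =>
      ∑ w ∈ G.neighborFinset i, (semiEdgeWalkCount G k i j + semiEdgeWalkCount G k w j)

/-- The `(i, j)` entry of `Q(G)^k` equals the number of semi-edge walks
of length `k` in `G` starting at `i` and terminating at `j`. -/
theorem signlessLaplacian_pow_entry {n : ℕ} (G : SimpleGraph (Fin n))
    [DecidableRel G.Adj] (k : ℕ) (i j : Fin n) :
    (signlessLaplacian G ^ k) i j = (semiEdgeWalkCount G k i j : ℝ) := by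
  induction k generalizing i j with
  | zero =>
    simp [semiEdgeWalkCount, Matrix.one_apply]
  | succ k ih =>
    rw [pow_succ', Matrix.mul_apply]
    simp only [ih]
    simp only [signlessLaplacian, Matrix.add_apply, Matrix.diagonal_apply,
      SimpleGraph.adjMatrix_apply, add_mul, ite_mul, zero_mul, one_mul]
    rw [Finset.sum_add_distrib]
    have h1 : (∑ w, if i = w then (G.degree i : ℝ) * (semiEdgeWalkCount G k w j : ℝ) else 0)
        = (G.degree i : ℝ) * (semiEdgeWalkCount G k i j : ℝ) := by
      rw [Finset.sum_eq_single i]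
      · simp
      · intro b _ hb; simp [Ne.symm hb]
      · simp
    have h2 : (∑ w, if G.Adj i w then (semiEdgeWalkCount G k w j : ℝ) else 0)
        = ∑ w ∈ G.neighborFinset i, (semiEdgeWalkCount G k w j : ℝ) := by
      rw [SimpleGraph.neighborFinset_eq_filter, Finset.sum_filter]
    rw [h1, h2]
    simp only [semiEdgeWalkCount]
    push_cast
    rw [Finset.sum_add_distrib, Finset.sum_const, SimpleGraph.card_neighborFinset_eq_degree]
    ring
end

section
/- Let G_1 and G_2 be regular simple graphs of degrees r_1 and r_2 on n_1 and n_2 vertices respectively, and let G = G_1 ∨ G_2 be their join. Then the signless Laplacian characteristic polynomial of G satisfies f_Q(λ) = (1 - n_1·n_2/((λ - n_1 - 2r_2)(λ - n_2 - 2r_1))) · f_{Q_1}(λ - n_2) · f_{Q_2}(λ - n_1). -/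
open Matrix BigOperators

instance {α β : Type*} (G1 : SimpleGraph α) (G2 : SimpleGraph β)
    [DecidableRel G1.Adj] [DecidableRel G2.Adj] : DecidableRel (G1 ⊕g G2).Adj := fun x y => by
  cases x <;> cases y <;> simp only [SimpleGraph.sum_adj] <;> infer_instance

/-- The join `G1 ∨ G2` of two graphs: the disjoint union together with all edges between
the two vertex sets.  Equivalently, the complement of the disjoint sum of the complements. -/
def gJoin {α β : Type*} (G1 : SimpleGraph α) (G2 : SimpleGraph β) : SimpleGraph (α ⊕ β) :=
  (G1ᶜ ⊕g G2ᶜ)ᶜ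

instance {α β : Type*} [DecidableEq α] [DecidableEq β]
    (G1 : SimpleGraph α) (G2 : SimpleGraph β)
    [DecidableRel G1.Adj] [DecidableRel G2.Adj] : DecidableRel (gJoin G1 G2).Adj :=
  inferInstanceAs (DecidableRel (G1ᶜ ⊕g G2ᶜ)ᶜ.Adj)

/-! ### Auxiliary lemmas -/

open Polynomial Finset

set_option linter.unusedSectionVars false

section Aux

variable {m n : Type*} [Fintype m] [DecidableEq m] [Fintype n] [DecidableEq n]

lemma eval_charpoly' (M : Matrix m m ℝ) (t : ℝ) :
    M.charpoly.eval t = (t • (1 : Matrix m m ℝ) - M).det := by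
  rw [Matrix.charpoly, ← Polynomial.coe_evalRingHom, RingHom.map_det]
  congr 1
  ext i j
  by_cases h : i = j
  · subst h; simp [Matrix.charmatrix_apply_eq, Matrix.one_apply]
  · simp [Matrix.charmatrix_apply_ne _ _ _ h, Matrix.one_apply_ne h]

lemma charpoly_comp_ne_zero (M : Matrix m m ℝ) (c : ℝ) :
    M.charpoly.comp (X - C c) ≠ 0 := by
  intro h
  have h0 : M.charpoly = 0 := by
    apply Polynomial.zero_of_eval_zero
    intro t
    have := congrArg (Polynomial.eval (t + c)) h
    simpa [Polynomial.eval_comp] using this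
  exact (Matrix.charpoly_monic M).ne_zero h0

lemma det_updateColumn_const (A : Matrix m m ℝ) (j0 : m) (μ : ℝ)
    (hA : ∀ i, ∑ j, A i j = μ) :
    A.det = μ * (A.updateCol j0 (fun _ => (1:ℝ))).det := by
  have h1 : (fun k => ∑ i, (1:ℝ) • A k i) = (fun _ : m => μ) := by
    ext k; simp [hA k]
  have h2 := Matrix.det_updateCol_sum A j0 (fun _ => (1:ℝ))
  rw [h1] at h2
  have h3 : (fun _ : m => μ) = μ • (fun _ : m => (1:ℝ)) := by ext; simp
  rw [h3, Matrix.det_updateCol_smul] at h2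
  simpa using h2.symm

/-- If all row sums of `A` equal `μ`, then `μ * det(A - s·J) = (μ - s·|m|) * det A`. -/
lemma det_sub_smul_ones (A : Matrix m m ℝ) (μ s : ℝ)
    (hA : ∀ i, ∑ j, A i j = μ) :
    μ * (A - s • Matrix.of (fun _ _ : m => (1:ℝ))).det
      = (μ - s * Fintype.card m) * A.det := by
  rcases isEmpty_or_nonempty m with hm | hm
  · simp [Matrix.det_isEmpty]
  obtain ⟨j0⟩ := hm
  set N : Matrix m m ℝ := A - s • Matrix.of (fun _ _ : m => (1:ℝ)) with hN
  have hNsum : ∀ i, ∑ j, N i j = μ - s * Fintype.card m := by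
    intro i
    simp [hN, Finset.sum_sub_distrib, hA i, Finset.card_univ, mul_comm]
  have hdetA := det_updateColumn_const A j0 μ hA
  have hdetN := det_updateColumn_const N j0 (μ - s * Fintype.card m) hNsum
  set G0 : Matrix m m ℝ := A.updateCol j0 (fun _ => (1:ℝ)) with hG0
  set c : m → ℝ := fun j => if j = j0 then 1 else -s with hc
  set E : Matrix m m ℝ := (1 : Matrix m m ℝ).updateRow j0 c with hE
  have hdetE : E.det = 1 := by
    have h1 : c = ∑ i, c i • (1 : Matrix m m ℝ) i := by
      ext j
      simp [Matrix.one_apply]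
    have h2 := Matrix.det_updateRow_sum (1 : Matrix m m ℝ) j0 c
    rw [hE, h1, h2]
    simp [hc]
  have hGE : N.updateCol j0 (fun _ => (1:ℝ)) = G0 * E := by
    ext k j
    rw [Matrix.mul_apply]
    have hEapply : ∀ l, E l j = if l = j0 then c j else if l = j then 1 else 0 := by
      intro l
      by_cases hl : l = j0 <;> simp [hE, hl, Matrix.one_apply]
    have hsplit : ∀ l, G0 k l * E l j
        = (if l = j0 then G0 k j0 * c j else 0) + (if l ≠ j0 ∧ l = j then G0 k j else 0) := by
      intro l
      rcases eq_or_ne l j0 with hl | hl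
      · subst hl; simp [hEapply]
      · by_cases hlj : l = j
        · subst hlj; simp [hEapply, hl]
        · simp [hEapply, hl, hlj]
    rw [Finset.sum_congr rfl (fun l _ => hsplit l), Finset.sum_add_distrib]
    rw [Finset.sum_ite_eq' Finset.univ j0 (fun _ => G0 k j0 * c j)]
    simp only [Finset.mem_univ, if_true]
    rcases eq_or_ne j j0 with hj | hj
    · subst hj
      have : ∀ l, (if l ≠ j ∧ l = j then G0 k j else 0) = 0 := by
        intro l; by_cases hl : l = j <;> simp [hl]
      rw [Finset.sum_congr rfl (fun l _ => this l)]
      simp [hc, hG0]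
    · have : ∀ l ∈ Finset.univ, (if l ≠ j0 ∧ l = j then G0 k j else 0)
          = if l = j then G0 k j else 0 := by
        intro l _
        by_cases hl : l = j
        · subst hl; simp [hj]
        · simp [hl]
      rw [Finset.sum_congr rfl this, Finset.sum_ite_eq' Finset.univ j (fun _ => G0 k j)]
      have hcj : c j = -s := by simp [hc, hj]
      simp [hcj, hc, hG0, hj, hN, Matrix.updateCol_apply, hj]
      ring
  have key : (N.updateCol j0 (fun _ => (1:ℝ))).det = G0.det := by
    rw [hGE, Matrix.det_mul, hdetE, mul_one]
  rw [hdetA, hdetN, key]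
  ring

lemma sum_inv_entries (B : Matrix n n ℝ) (ν : ℝ) (hB : ∀ i, ∑ j, B i j = ν)
    (hdet : B.det ≠ 0) :
    ν * (∑ i, ∑ j, B⁻¹ i j) = Fintype.card n := by
  have hinv : B⁻¹ * B = 1 := Matrix.nonsing_inv_mul B (Ne.isUnit hdet)
  have h1 : ∑ i, ∑ j, (B⁻¹ * B) i j = (Fintype.card n : ℝ) := by
    rw [hinv]
    simp [Matrix.one_apply, Finset.card_univ]
  have h2 : ∑ i, ∑ j, (B⁻¹ * B) i j = ν * (∑ i, ∑ j, B⁻¹ i j) := by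
    simp only [Matrix.mul_apply]
    rw [Finset.mul_sum]
    refine Finset.sum_congr rfl fun i _ => ?_
    rw [Finset.sum_comm, Finset.mul_sum]
    refine Finset.sum_congr rfl fun l _ => ?_
    rw [← Finset.mul_sum, hB l, mul_comm]
  rw [← h2, h1]

/-- Pointwise Schur-complement identity for the join block matrix. -/
lemma schur_pointwise (A : Matrix m m ℝ) (B : Matrix n n ℝ) (μ ν : ℝ)
    (hA : ∀ i, ∑ j, A i j = μ) (hB : ∀ i, ∑ j, B i j = ν)
    (hdet : B.det ≠ 0) :
    ν * μ * (Matrix.fromBlocks A (Matrix.of fun (_:m) (_:n) => (-1:ℝ))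
        (Matrix.of fun (_:n) (_:m) => (-1:ℝ)) B).det
      = (ν * μ - (Fintype.card n) * (Fintype.card m)) * A.det * B.det := by
  have : Invertible B := B.invertibleOfIsUnitDet (Ne.isUnit hdet)
  rw [Matrix.det_fromBlocks₂₂, Matrix.invOf_eq_nonsing_inv]
  set s : ℝ := ∑ i, ∑ j, B⁻¹ i j with hs
  have hprod : (Matrix.of fun (_:m) (_:n) => (-1:ℝ)) * B⁻¹ * (Matrix.of fun (_:n) (_:m) => (-1:ℝ))
      = s • Matrix.of (fun _ _ : m => (1:ℝ)) := by
    ext i j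
    simp only [Matrix.mul_apply, Matrix.of_apply, Matrix.smul_apply, smul_eq_mul, mul_one,
      neg_one_mul, mul_neg_one, Finset.sum_neg_distrib, neg_neg]
    rw [hs, Finset.sum_comm]
  rw [hprod]
  have e1 := det_sub_smul_ones A μ s hA
  have e2 := sum_inv_entries B ν hB hdet
  rw [← hs] at e2
  linear_combination (ν * B.det) * e1 - ((Fintype.card m : ℝ) * A.det * B.det) * e2

end Aux

section GraphAux

variable {α β : Type*} [Fintype α] [DecidableEq α] [Fintype β] [DecidableEq β]
  (G1 : SimpleGraph α) (G2 : SimpleGraph β) [DecidableRel G1.Adj] [DecidableRel G2.Adj]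

lemma gJoin_adj_inl_inl (a b : α) :
    (gJoin G1 G2).Adj (Sum.inl a) (Sum.inl b) ↔ G1.Adj a b := by
  have hne := fun h : G1.Adj a b => G1.ne_of_adj h
  simp only [gJoin, SimpleGraph.compl_adj, SimpleGraph.sum_adj, ne_eq, Sum.inl.injEq]
  tauto

lemma gJoin_adj_inl_inr (a : α) (b : β) :
    (gJoin G1 G2).Adj (Sum.inl a) (Sum.inr b) := by
  simp [gJoin, SimpleGraph.compl_adj, SimpleGraph.sum_adj]

lemma gJoin_adj_inr_inl (b : β) (a : α) :
    (gJoin G1 G2).Adj (Sum.inr b) (Sum.inl a) := by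
  simp [gJoin, SimpleGraph.compl_adj, SimpleGraph.sum_adj]

lemma gJoin_adj_inr_inr (a b : β) :
    (gJoin G1 G2).Adj (Sum.inr a) (Sum.inr b) ↔ G2.Adj a b := by
  have hne := fun h : G2.Adj a b => G2.ne_of_adj h
  simp only [gJoin, SimpleGraph.compl_adj, SimpleGraph.sum_adj, ne_eq, Sum.inr.injEq]
  tauto

lemma degree_sum_eq {V : Type*} [Fintype V] [DecidableEq V]
    (G : SimpleGraph V) [DecidableRel G.Adj] (v : V) :
    (G.degree v : ℝ) = ∑ u, if G.Adj v u then (1:ℝ) else 0 := by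
  rw [← SimpleGraph.card_neighborFinset_eq_degree, SimpleGraph.neighborFinset_eq_filter,
    Finset.card_filter]
  push_cast
  rfl

lemma gJoin_degree_inl (a : α) :
    ((gJoin G1 G2).degree (Sum.inl a) : ℝ) = G1.degree a + Fintype.card β := by
  rw [degree_sum_eq, degree_sum_eq, Fintype.sum_sum_type]
  congr 1
  · exact Finset.sum_congr rfl fun b _ => by simp [gJoin_adj_inl_inl]
  · simp [gJoin_adj_inl_inr, Finset.card_univ]

lemma gJoin_degree_inr (b : β) :
    ((gJoin G1 G2).degree (Sum.inr b) : ℝ) = G2.degree b + Fintype.card α := by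
  rw [degree_sum_eq, degree_sum_eq, Fintype.sum_sum_type, add_comm]
  congr 1
  · exact Finset.sum_congr rfl fun a _ => by simp [gJoin_adj_inr_inr]
  · simp [gJoin_adj_inr_inl, Finset.card_univ]

/-- Block structure of `λ·1 - Q(join)`. -/
lemma join_block (lam : ℝ) :
    lam • (1 : Matrix (α ⊕ β) (α ⊕ β) ℝ) - signlessLaplacian (gJoin G1 G2)
      = Matrix.fromBlocks
          ((lam - Fintype.card β) • (1 : Matrix α α ℝ) - signlessLaplacian G1)
          (Matrix.of fun (_:α) (_:β) => (-1:ℝ))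
          (Matrix.of fun (_:β) (_:α) => (-1:ℝ))
          ((lam - Fintype.card α) • (1 : Matrix β β ℝ) - signlessLaplacian G2) := by
  ext (i | i) (j | j)
  · simp only [Matrix.sub_apply, Matrix.smul_apply, Matrix.fromBlocks_apply₁₁,
      signlessLaplacian, Matrix.add_apply, SimpleGraph.adjMatrix_apply, smul_eq_mul,
      gJoin_adj_inl_inl]
    rcases eq_or_ne i j with h | h
    · subst h
      simp only [Matrix.one_apply_eq, Matrix.diagonal_apply_eq, gJoin_degree_inl]
      ring
    · simp [Matrix.one_apply_ne, h, Matrix.diagonal_apply_ne,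
        (show Sum.inl i ≠ (Sum.inl j : α ⊕ β) by simpa using h)]
  · simp [signlessLaplacian, Matrix.one_apply, gJoin_adj_inl_inr]
  · simp [signlessLaplacian, Matrix.one_apply, gJoin_adj_inr_inl]
  · simp only [Matrix.sub_apply, Matrix.smul_apply, Matrix.fromBlocks_apply₂₂,
      signlessLaplacian, Matrix.add_apply, SimpleGraph.adjMatrix_apply, smul_eq_mul,
      gJoin_adj_inr_inr]
    rcases eq_or_ne i j with h | h
    · subst h
      simp only [Matrix.one_apply_eq, Matrix.diagonal_apply_eq, gJoin_degree_inr]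
      ring
    · simp [Matrix.one_apply_ne, h, Matrix.diagonal_apply_ne,
        (show Sum.inr i ≠ (Sum.inr j : α ⊕ β) by simpa using h)]

lemma rowsum_shift {V : Type*} [Fintype V] [DecidableEq V]
    (G : SimpleGraph V) [DecidableRel G.Adj] {r : ℕ} (hG : G.IsRegularOfDegree r) (t : ℝ)
    (i : V) :
    ∑ j, ((t • (1 : Matrix V V ℝ) - signlessLaplacian G) i j) = t - 2 * r := by
  simp only [Matrix.sub_apply, Matrix.smul_apply, signlessLaplacian, Matrix.add_apply,
    SimpleGraph.adjMatrix_apply, smul_eq_mul]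
  rw [Finset.sum_sub_distrib, Finset.sum_add_distrib]
  have h1 : ∑ j, t * (1 : Matrix V V ℝ) i j = t := by
    simp [Matrix.one_apply, Finset.sum_ite_eq' Finset.univ i]
  have h2 : ∑ j, Matrix.diagonal (fun v => (G.degree v : ℝ)) i j = r := by
    simp [Matrix.diagonal_apply, Finset.sum_ite_eq' Finset.univ i, hG i]
  have h3 : ∑ j, (if G.Adj i j then (1:ℝ) else 0) = r := by
    rw [← degree_sum_eq, hG i]
  rw [h1, h2, h3]
  ring

end GraphAux

/-- For `G1` an `r1`-regular graph on `n1` vertices and `G2` an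
`r2`-regular graph on `n2` vertices, the signless Laplacian characteristic polynomial of
the join `G = G1 ∨ G2` satisfies (away from the poles of the rational factor)
`f_Q(lam) = (1 - n1 n2 /((lam - n1 - 2 r2)(lam - n2 - 2 r1))) f_{Q1}(lam - n2) f_{Q2}(lam - n1)`. -/
theorem charpoly_join_regular {n1 n2 r1 r2 : ℕ}
    (G1 : SimpleGraph (Fin n1)) (G2 : SimpleGraph (Fin n2))
    [DecidableRel G1.Adj] [DecidableRel G2.Adj]
    (h1 : G1.IsRegularOfDegree r1) (h2 : G2.IsRegularOfDegree r2) (lam : ℝ)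
    (hden : (lam - n1 - 2 * r2) * (lam - n2 - 2 * r1) ≠ 0) :
    (lam • (1 : Matrix (Fin n1 ⊕ Fin n2) (Fin n1 ⊕ Fin n2) ℝ) -
        signlessLaplacian (gJoin G1 G2)).det =
      (1 - (n1 : ℝ) * n2 / ((lam - n1 - 2 * r2) * (lam - n2 - 2 * r1))) *
        (((lam - n2) • (1 : Matrix (Fin n1) (Fin n1) ℝ) - signlessLaplacian G1).det) *
        (((lam - n1) • (1 : Matrix (Fin n2) (Fin n2) ℝ) - signlessLaplacian G2).det) := by
  classical
  -- polynomial identity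
  have hpq : (X - C ((n1:ℝ) + 2*r2)) * (X - C ((n2:ℝ) + 2*r1)) *
        (signlessLaplacian (gJoin G1 G2)).charpoly
      = ((X - C ((n1:ℝ) + 2*r2)) * (X - C ((n2:ℝ) + 2*r1)) - C ((n1:ℝ)*(n2:ℝ))) *
        ((signlessLaplacian G1).charpoly.comp (X - C (n2:ℝ))) *
        ((signlessLaplacian G2).charpoly.comp (X - C (n1:ℝ))) := by
    apply Polynomial.eq_of_infinite_eval_eq
    have hfin := Polynomial.finite_setOf_isRoot
      (charpoly_comp_ne_zero (signlessLaplacian G2) (n1:ℝ))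
    have hinf : {x : ℝ | ¬ ((signlessLaplacian G2).charpoly.comp (X - C (n1:ℝ))).IsRoot x}.Infinite := by
      have := hfin.infinite_compl
      simpa [Set.compl_setOf] using this
    refine hinf.mono ?_
    intro x hx
    simp only [Set.mem_setOf_eq] at hx ⊢
    have hdetB : (((x - (n1:ℝ)) • (1 : Matrix (Fin n2) (Fin n2) ℝ)) - signlessLaplacian G2).det ≠ 0 := by
      rw [← eval_charpoly']
      simpa [Polynomial.IsRoot, Polynomial.eval_comp] using hx
    have hA : ∀ i, ∑ j, (((x - (n2:ℝ)) • (1 : Matrix (Fin n1) (Fin n1) ℝ) -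
        signlessLaplacian G1) i j) = (x - (n2:ℝ)) - 2*r1 := rowsum_shift G1 h1 (x - (n2:ℝ))
    have hB : ∀ i, ∑ j, (((x - (n1:ℝ)) • (1 : Matrix (Fin n2) (Fin n2) ℝ) -
        signlessLaplacian G2) i j) = (x - (n1:ℝ)) - 2*r2 := rowsum_shift G2 h2 (x - (n1:ℝ))
    have hs := schur_pointwise
      ((x - (n2:ℝ)) • (1 : Matrix (Fin n1) (Fin n1) ℝ) - signlessLaplacian G1)
      ((x - (n1:ℝ)) • (1 : Matrix (Fin n2) (Fin n2) ℝ) - signlessLaplacian G2)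
      ((x - (n2:ℝ)) - 2*r1) ((x - (n1:ℝ)) - 2*r2) hA hB hdetB
    have hJB := join_block G1 G2 x
    simp only [Fintype.card_fin] at hJB hs
    simp only [Polynomial.eval_mul, Polynomial.eval_sub, Polynomial.eval_X, Polynomial.eval_C,
      Polynomial.eval_comp, eval_charpoly', hJB]
    linear_combination hs
  have hev := congrArg (Polynomial.eval lam) hpq
  simp only [Polynomial.eval_mul, Polynomial.eval_sub, Polynomial.eval_X, Polynomial.eval_C,
    Polynomial.eval_comp, eval_charpoly'] at hev
  rw [one_sub_div hden, div_mul_eq_mul_div, div_mul_eq_mul_div, eq_div_iff hden]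
  linear_combination hev
end

section
/- Let G be a simple connected graph on n vertices. If q_0 is an eigenvalue of the signless Laplacian Q(G) with multiplicity s ≥ 2, then n - 2 - q_0 is an eigenvalue of the signless Laplacian Q(Ḡ) of the complement, with multiplicity t satisfying s - 1 ≤ t ≤ s + 1. -/
open Matrix BigOperators

section Aux

open Polynomial Finset RealInnerProductSpace

set_option maxHeartbeats 1000000

lemma charpoly_diagonal {n : ℕ} (d : Fin n → ℝ) :
    (Matrix.diagonal d).charpoly = ∏ i, (X - C (d i)) := by
  have h : charmatrix (Matrix.diagonal d) = Matrix.diagonal (fun i => (X : ℝ[X]) - C (d i)) := by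
    ext i j
    by_cases hij : i = j
    · subst hij; simp [charmatrix_apply_eq]
    · simp [charmatrix_apply_ne _ _ _ hij, Matrix.diagonal_apply_ne _ hij]
  rw [Matrix.charpoly, h, Matrix.det_diagonal]

lemma herm_charpoly {n : ℕ} (A : Matrix (Fin n) (Fin n) ℝ) (hA : A.IsHermitian) :
    A.charpoly = ∏ i, (X - C (hA.eigenvalues i)) := by
  classical
  rcases Nat.eq_zero_or_pos n with hn | hn
  · subst hn
    rw [Matrix.charpoly, Matrix.det_isEmpty]
    simp
  have : Nonempty (Fin n) := ⟨⟨0, hn⟩⟩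
  set v : Fin n → (Fin n → ℝ) := fun i => ⇑(hA.eigenvectorBasis i) with hv
  have hli : LinearIndependent ℝ v := by
    have h1 : LinearIndependent ℝ (fun i => hA.eigenvectorBasis i) :=
      hA.eigenvectorBasis.orthonormal.linearIndependent
    exact h1.map' (WithLp.linearEquiv 2 ℝ (Fin n → ℝ)).toLinearMap
      (LinearEquiv.ker _)
  have hcard : Fintype.card (Fin n) = Module.finrank ℝ (Fin n → ℝ) := by simp
  let b : Module.Basis (Fin n) ℝ (Fin n → ℝ) := basisOfLinearIndependentOfCardEqFinrank hli hcard
  have hb : ∀ i, b i = v i := fun i => by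
    simp [b, coe_basisOfLinearIndependentOfCardEqFinrank]
  have hmat : LinearMap.toMatrix b b (Matrix.toLin' A) = Matrix.diagonal hA.eigenvalues := by
    ext i j
    rw [LinearMap.toMatrix_apply, hb, Matrix.toLin'_apply]
    have h2 : A *ᵥ v j = hA.eigenvalues j • v j := hA.mulVec_eigenvectorBasis j
    rw [h2, ← hb, _root_.map_smul]
    by_cases hij : i = j
    · subst hij; simp
    · simp [Module.Basis.repr_self, Finsupp.single_apply, hij, Matrix.diagonal_apply_ne _ hij,
        Ne.symm hij]
  have h1 : A.charpoly = LinearMap.charpoly (Matrix.toLin' A) := by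
    rw [← LinearMap.charpoly_toMatrix (Matrix.toLin' A) (Pi.basisFun ℝ (Fin n)),
      LinearMap.toMatrix_eq_toMatrix', LinearMap.toMatrix'_toLin']
  rw [h1, ← LinearMap.charpoly_toMatrix (Matrix.toLin' A) b, hmat, _root_.charpoly_diagonal]

lemma rootMult_prod {n : ℕ} (d : Fin n → ℝ) (q : ℝ) :
    (∏ i, ((X : ℝ[X]) - C (d i))).rootMultiplicity q
      = (univ.filter fun i => d i = q).card := by
  have h : (∏ i, ((X : ℝ[X]) - C (d i)))
      = ((univ.val.map d).map fun a => X - C a).prod := by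
    rw [Multiset.map_map]
    rfl
  rw [← Polynomial.count_roots, h, Polynomial.roots_multiset_prod_X_sub_C,
    Multiset.count_map]
  rw [Finset.card_filter]
  simp [Finset.sum_boole, eq_comm, Multiset.filter_map]
  rfl

lemma herm_charpoly' {n : ℕ} (A : Matrix (Fin n) (Fin n) ℝ) (hA : A.IsHermitian) (q : ℝ) :
    A.charpoly.rootMultiplicity q = (univ.filter fun i => hA.eigenvalues i = q).card := by
  rw [herm_charpoly A hA, rootMult_prod]

noncomputable def sumFun (n : ℕ) : EuclideanSpace ℝ (Fin n) →ₗ[ℝ] ℝ :=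
  ∑ i, PiLp.projₗ 2 (fun _ : Fin n => ℝ) i

lemma sumFun_apply {n : ℕ} (y : EuclideanSpace ℝ (Fin n)) : sumFun n y = ∑ i, y i := by
  simp [sumFun]

lemma span_eigen_finrank {n : ℕ} {A : Matrix (Fin n) (Fin n) ℝ} (hA : A.IsHermitian) (q : ℝ) :
    Module.finrank ℝ (Submodule.span ℝ (Set.range
        (fun i : {i // hA.eigenvalues i = q} => hA.eigenvectorBasis i)))
      = (univ.filter fun i => hA.eigenvalues i = q).card := by
  classical
  have hli : LinearIndependent ℝ
      (fun i : {i // hA.eigenvalues i = q} => hA.eigenvectorBasis i) :=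
    (hA.eigenvectorBasis.orthonormal.comp _ Subtype.val_injective).linearIndependent
  rw [finrank_span_eq_card hli, Fintype.card_subtype]

lemma eigen_mem_span {n : ℕ} {B : Matrix (Fin n) (Fin n) ℝ} (hB : B.IsHermitian) (r : ℝ)
    (y : EuclideanSpace ℝ (Fin n)) (hy : Matrix.toEuclideanLin B y = r • y) :
    y ∈ Submodule.span ℝ (Set.range
        (fun i : {i // hB.eigenvalues i = r} => hB.eigenvectorBasis i)) := by
  classical
  set b := hB.eigenvectorBasis with hb
  have hS : (Matrix.toEuclideanLin B).IsSymmetric :=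
    (Matrix.isHermitian_iff_isSymmetric).1 hB
  have hTb : ∀ j, Matrix.toEuclideanLin B (b j) = hB.eigenvalues j • b j := by
    intro j
    apply (WithLp.equiv 2 (Fin n → ℝ)).injective
    have := hB.mulVec_eigenvectorBasis j
    simpa [Matrix.piLp_ofLp_toEuclideanLin, Matrix.toLin'_apply] using this
  have hzero : ∀ j, hB.eigenvalues j ≠ r → b.repr y j = 0 := by
    intro j hj
    have h1 := hS (b j) y
    rw [hTb j, hy, real_inner_smul_left, real_inner_smul_right] at h1
    have h2 : (hB.eigenvalues j - r) * (inner ℝ (b j) y : ℝ) = 0 := by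
      have := h1
      nlinarith [h1]
    rcases mul_eq_zero.1 h2 with h | h
    · exact absurd (by linarith : hB.eigenvalues j = r) hj
    · rw [b.repr_apply_apply]; exact h
  have hsum := b.sum_repr y
  rw [← hsum]
  apply Submodule.sum_mem
  intro j _
  by_cases hj : hB.eigenvalues j = r
  · exact Submodule.smul_mem _ _ (Submodule.subset_span ⟨⟨j, hj⟩, rfl⟩)
  · rw [hzero j hj, zero_smul]; exact Submodule.zero_mem _

lemma main_ineq {n : ℕ} (A B : Matrix (Fin n) (Fin n) ℝ)
    (hA : A.IsHermitian) (hB : B.IsHermitian) (q r : ℝ)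
    (hrel : ∀ x : Fin n → ℝ, (∑ i, x i) = 0 → A *ᵥ x = q • x → B *ᵥ x = r • x) :
    A.charpoly.rootMultiplicity q ≤ B.charpoly.rootMultiplicity r + 1 := by
  classical
  rw [herm_charpoly' A hA q, herm_charpoly' B hB r]
  set SA := Submodule.span ℝ (Set.range
      (fun i : {i // hA.eigenvalues i = q} => hA.eigenvectorBasis i)) with hSA
  set SB := Submodule.span ℝ (Set.range
      (fun i : {i // hB.eigenvalues i = r} => hB.eigenvectorBasis i)) with hSB
  rw [← span_eigen_finrank hA q, ← span_eigen_finrank hB r]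
  show Module.finrank ℝ SA ≤ Module.finrank ℝ SB + 1
  have hSAeig : ∀ z ∈ SA, Matrix.toEuclideanLin A z = q • z := by
    intro z hz
    have : SA ≤ LinearMap.ker (Matrix.toEuclideanLin A - q • LinearMap.id) := by
      rw [hSA, Submodule.span_le]
      rintro _ ⟨i, rfl⟩
      simp only [SetLike.mem_coe, LinearMap.mem_ker, LinearMap.sub_apply,
        LinearMap.smul_apply, LinearMap.id_apply, sub_eq_zero]
      have : Matrix.toEuclideanLin A (hA.eigenvectorBasis i) =
          hA.eigenvalues i • hA.eigenvectorBasis i := by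
        apply (WithLp.equiv 2 (Fin n → ℝ)).injective
        simpa [Matrix.piLp_ofLp_toEuclideanLin, Matrix.toLin'_apply] using
          hA.mulVec_eigenvectorBasis i
      rw [this, i.2]
    have := this hz
    simp only [LinearMap.mem_ker, LinearMap.sub_apply, LinearMap.smul_apply,
      LinearMap.id_apply, sub_eq_zero] at this
    exact this
  set g : SA →ₗ[ℝ] ℝ := (sumFun n).comp SA.subtype with hg
  have hker : Module.finrank ℝ SA ≤ Module.finrank ℝ (LinearMap.ker g) + 1 := by
    have h1 := LinearMap.finrank_range_add_finrank_ker g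
    have h2 : Module.finrank ℝ (LinearMap.range g) ≤ 1 := by
      simpa using Submodule.finrank_le (LinearMap.range g)
    omega
  set U := Submodule.map SA.subtype (LinearMap.ker g) with hU
  have hUfr : Module.finrank ℝ U = Module.finrank ℝ (LinearMap.ker g) :=
    Submodule.finrank_map_subtype_eq SA (LinearMap.ker g)
  have hUSB : U ≤ SB := by
    rintro u ⟨⟨z, hzSA⟩, hzker, rfl⟩
    have hzker' : (∑ i, z i) = 0 := by
      have h0 : sumFun n z = 0 := hzker
      rwa [sumFun_apply] at h0
    have hAz : A *ᵥ (WithLp.equiv 2 (Fin n → ℝ) z) = q • (WithLp.equiv 2 (Fin n → ℝ) z) := by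
      have := hSAeig z hzSA
      have h3 := congrArg (WithLp.equiv 2 (Fin n → ℝ)) this
      rwa [WithLp.equiv_apply, WithLp.equiv_apply, Matrix.piLp_ofLp_toEuclideanLin, Matrix.toLin'_apply] at h3
    have hBz := hrel _ hzker' hAz
    show z ∈ SB
    apply eigen_mem_span hB r
    apply (WithLp.equiv 2 (Fin n → ℝ)).injective
    rw [WithLp.equiv_apply, WithLp.equiv_apply, Matrix.piLp_ofLp_toEuclideanLin, Matrix.toLin'_apply]
    exact hBz
  have hfin : Module.finrank ℝ U ≤ Module.finrank ℝ SB := Submodule.finrank_mono hUSB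
  omega

lemma sl_herm {n : ℕ} (G : SimpleGraph (Fin n)) [DecidableRel G.Adj] :
    (signlessLaplacian G).IsHermitian := by
  unfold Matrix.IsHermitian signlessLaplacian
  ext i j
  simp only [Matrix.conjTranspose_apply, Matrix.add_apply, SimpleGraph.adjMatrix_apply,
    star_trivial, Matrix.diagonal_apply]
  by_cases hij : i = j
  · subst hij; rfl
  · simp [hij, Ne.symm hij, SimpleGraph.adj_comm]

lemma sl_compl {n : ℕ} (G : SimpleGraph (Fin n)) [DecidableRel G.Adj] (hn : 0 < n) :
    signlessLaplacian Gᶜ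
      = ((n : ℝ) - 2) • (1 : Matrix (Fin n) (Fin n) ℝ)
        + Matrix.of (fun _ _ => (1 : ℝ)) - signlessLaplacian G := by
  classical
  unfold signlessLaplacian
  ext i j
  by_cases hij : i = j
  · subst hij
    have hdeg : G.degree i < n := by
      simpa [Fintype.card_fin] using G.degree_lt_card_verts i
    have hdegc : Gᶜ.degree i = n - 1 - G.degree i := by
      simpa [Fintype.card_fin] using SimpleGraph.degree_compl (G := G) (v := i)
    simp only [Matrix.sub_apply, Matrix.add_apply, Matrix.smul_apply, Matrix.one_apply_eq,
      Matrix.of_apply, Matrix.diagonal_apply_eq, SimpleGraph.adjMatrix_apply,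
      SimpleGraph.irrefl, if_false, smul_eq_mul, mul_one]
    rw [hdegc]
    have h1 : (1:ℕ) + G.degree i ≤ n := by omega
    push_cast [Nat.cast_sub (by omega : G.degree i ≤ n - 1), Nat.cast_sub (by omega : 1 ≤ n)]
    ring
  · simp only [Matrix.sub_apply, Matrix.add_apply, Matrix.smul_apply,
      Matrix.one_apply_ne hij, Matrix.of_apply, Matrix.diagonal_apply_ne _ hij,
      SimpleGraph.adjMatrix_apply, smul_eq_mul, mul_zero, zero_add,
      SimpleGraph.compl_adj]
    by_cases hadj : G.Adj i j <;> simp [hadj, hij]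

lemma sl_rel {n : ℕ} (G : SimpleGraph (Fin n)) [DecidableRel G.Adj] (q : ℝ)
    (x : Fin n → ℝ) (hx : ∑ i, x i = 0) (h : signlessLaplacian G *ᵥ x = q • x) :
    signlessLaplacian Gᶜ *ᵥ x = ((n : ℝ) - 2 - q) • x := by
  rcases Nat.eq_zero_or_pos n with hn | hn
  · subst hn; funext i; exact i.elim0
  rw [sl_compl G hn, Matrix.sub_mulVec, Matrix.add_mulVec, h]
  have hJ : (Matrix.of (fun _ _ => (1:ℝ)) : Matrix (Fin n) (Fin n) ℝ) *ᵥ x = 0 := by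
    funext i
    simp [Matrix.mulVec, dotProduct, hx]
  rw [hJ, Matrix.smul_mulVec, Matrix.one_mulVec]
  funext i
  simp [smul_eq_mul]
  ring

lemma sl_congr {V : Type*} [Fintype V] [DecidableEq V] {G₁ G₂ : SimpleGraph V}
    [DecidableRel G₁.Adj] [DecidableRel G₂.Adj] (h : G₁ = G₂) :
    signlessLaplacian G₁ = signlessLaplacian G₂ := by
  subst h
  exact congrArg (fun i => @signlessLaplacian V _ _ G₁ i) (Subsingleton.elim _ _)

end Aux

/-- Let `G` be a simple connected graph on `n` vertices.  If `q₀` is an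
eigenvalue of `Q(G)` with multiplicity `s ≥ 2` (multiplicity as a root of the
characteristic polynomial), then `n - 2 - q₀` is an eigenvalue of `Q(Gᶜ)` with
multiplicity `t` satisfying `s - 1 ≤ t ≤ s + 1`. -/
theorem multiplicity_compl {n : ℕ} (G : SimpleGraph (Fin n)) [DecidableRel G.Adj]
    (hG : G.Connected) (q₀ : ℝ) (s : ℕ)
    (hs : s = ((signlessLaplacian G).charpoly.rootMultiplicity q₀))
    (hs2 : 2 ≤ s) :
    s - 1 ≤ (signlessLaplacian Gᶜ).charpoly.rootMultiplicity ((n : ℝ) - 2 - q₀) ∧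
      (signlessLaplacian Gᶜ).charpoly.rootMultiplicity ((n : ℝ) - 2 - q₀) ≤ s + 1 := by
  classical
  have hA := sl_herm G
  have hB := sl_herm Gᶜ
  have h1 := main_ineq (signlessLaplacian G) (signlessLaplacian Gᶜ) hA hB
    q₀ ((n : ℝ) - 2 - q₀) (fun x hx hAx => sl_rel G q₀ x hx hAx)
  have hrel2 : ∀ x : Fin n → ℝ, (∑ i, x i) = 0 →
      signlessLaplacian Gᶜ *ᵥ x = ((n : ℝ) - 2 - q₀) • x →
      signlessLaplacian G *ᵥ x = q₀ • x := by
    intro x hx hBx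
    have h2 := sl_rel Gᶜ ((n : ℝ) - 2 - q₀) x hx hBx
    rw [sl_congr (compl_compl G)] at h2
    have h3 : ((n : ℝ) - 2 - ((n : ℝ) - 2 - q₀)) = q₀ := by ring
    rwa [h3] at h2
  have h4 := main_ineq (signlessLaplacian Gᶜ) (signlessLaplacian G) hB hA
    ((n : ℝ) - 2 - q₀) q₀ hrel2
  omega
end

section
/- Let G be a simple graph on n vertices with signless Laplacian Q, and let λ be a real number that is not an eigenvalue of Q. Then the Q-coronal Γ_Q(λ) = 1^T(λI - Q)^{-1}1 satisfies Γ_Q(λ) = -1 + (-1)^n · f_{Q̄}(n - 2 - λ)/f_Q(λ), where f_Q and f_{Q̄} are the signless Laplacian characteristic polynomials of G and its complement Ḡ. -/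
open Matrix BigOperators

/-- For a simple graph `G` on `n` vertices with signless Laplacian `Q`
and `lam` not an eigenvalue of `Q`, the `Q`-coronal `Γ_Q(lam) = 1ᵀ (lam I - Q)⁻¹ 1`
equals `-1 + (-1)^n * f_{Q̄}(n - 2 - lam) / f_Q(lam)`, where `f_Q`, `f_{Q̄}` are the
signless Laplacian characteristic polynomials of `G` and of its complement. -/
theorem coronal_eq {n : ℕ} (G : SimpleGraph (Fin n)) [DecidableRel G.Adj] (lam : ℝ)
    (h : (lam • (1 : Matrix (Fin n) (Fin n) ℝ) - signlessLaplacian G).det ≠ 0) :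
    ∑ i, ∑ j, (lam • (1 : Matrix (Fin n) (Fin n) ℝ) - signlessLaplacian G)⁻¹ i j =
      -1 + (-1) ^ n *
        (((((n : ℝ) - 2 - lam) • (1 : Matrix (Fin n) (Fin n) ℝ) - signlessLaplacian Gᶜ).det) /
          ((lam • (1 : Matrix (Fin n) (Fin n) ℝ) - signlessLaplacian G).det)) := by
  classical
  set M := lam • (1 : Matrix (Fin n) (Fin n) ℝ) - signlessLaplacian G with hM
  have key : (((n : ℝ) - 2 - lam) • (1 : Matrix (Fin n) (Fin n) ℝ) - signlessLaplacian Gᶜ)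
      = -(M + replicateCol Unit (fun _ => (1:ℝ)) * replicateRow Unit (fun _ => (1:ℝ))) := by
    ext i j
    have hn : 1 ≤ n := i.pos
    have hdeg : G.degree i ≤ n - 1 := by
      have := G.degree_lt_card_verts i
      simp only [Fintype.card_fin] at this
      omega
    have hJ : (replicateCol Unit (fun _ => (1:ℝ)) * replicateRow Unit (fun _ => (1:ℝ))) i j = 1 := by
      simp [Matrix.mul_apply]
    simp only [hM, Matrix.sub_apply, Matrix.neg_apply, Matrix.add_apply, Matrix.smul_apply,
      signlessLaplacian, Matrix.diagonal_apply, SimpleGraph.adjMatrix_apply, hJ, smul_eq_mul]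
    by_cases hij : i = j
    · subst hij
      have hdc : (Gᶜ.degree i : ℝ) = (n : ℝ) - 1 - G.degree i := by
        rw [SimpleGraph.degree_compl]
        have : Fintype.card (Fin n) - 1 - G.degree i = n - 1 - G.degree i := by
          simp
        rw [this]
        push_cast [Nat.cast_sub hdeg, Nat.cast_sub hn]
        ring
      simp [hdc, SimpleGraph.irrefl]
      ring
    · have : ¬ G.Adj j j := G.irrefl
      have hcadj : Gᶜ.Adj i j ↔ ¬ G.Adj i j := by
        simp [SimpleGraph.compl_adj, hij]
      by_cases hadj : G.Adj i j
      · simp [hij, Matrix.one_apply_ne hij, hcadj, hadj]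
      · simp [hij, Matrix.one_apply_ne hij, hcadj, hadj]
  have hdetM : IsUnit M.det := isUnit_iff_ne_zero.mpr h
  have hdl := Matrix.det_add_replicateCol_mul_replicateRow (ι := Unit) hdetM
      (fun _ => (1:ℝ)) (fun _ => (1:ℝ))
  have hsmall : ((1 : Matrix Unit Unit ℝ) + replicateRow Unit (fun (_ : Fin n) => (1:ℝ)) * M⁻¹ * replicateCol Unit (fun (_ : Fin n) => (1:ℝ))).det
      = 1 + ∑ i, ∑ j, M⁻¹ i j := by
    rw [Matrix.det_unique]
    simp only [Matrix.add_apply, Matrix.one_apply_eq, Matrix.mul_apply, Matrix.replicateRow_apply,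
      Matrix.replicateCol_apply, one_mul, mul_one]
    rw [Finset.sum_comm]
  rw [key, Matrix.det_neg, hdl, hsmall]
  field_simp
  ring_nf
  rw [Fintype.card_fin]
  have hx : ((-1:ℝ))^n * (-1)^n = 1 := by rw [← mul_pow]; norm_num
  linear_combination (-(∑ i, ∑ j, M⁻¹ i j) - 1) * hx
end

section
/- Let G_1 be r_1-regular on n_1 vertices and G_2 be r_2-regular on n_2 vertices, and set G = G_1 ∨ G_2 (join), n = n_1 + n_2. Then for λ avoiding the relevant poles, the Q-coronal of G equals Γ_Q(λ) = ((λ - n_2 - 2r_1)n_2 + (λ - n_1 - 2r_2)n_1 + 2n_1n_2) / ((λ - n_2 - 2r_1)(λ - n_1 - 2r_2) - n_1n_2). -/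
open Matrix BigOperators

section aux

variable {n1 n2 : ℕ} (G1 : SimpleGraph (Fin n1)) (G2 : SimpleGraph (Fin n2))
    [DecidableRel G1.Adj] [DecidableRel G2.Adj]

lemma gJoin_adj_ll (i j : Fin n1) :
    (gJoin G1 G2).Adj (Sum.inl i) (Sum.inl j) ↔ G1.Adj i j := by
  simp only [gJoin, SimpleGraph.compl_adj, SimpleGraph.sum_adj, SimpleGraph.compl_adj, ne_eq,
    Sum.inl.injEq, not_and, not_not]
  constructor
  · rintro ⟨h, h2⟩; exact h2 (by simpa using h)
  · intro h; exact ⟨by simp [G1.ne_of_adj h], fun _ => h⟩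

lemma gJoin_adj_rr (i j : Fin n2) :
    (gJoin G1 G2).Adj (Sum.inr i) (Sum.inr j) ↔ G2.Adj i j := by
  simp only [gJoin, SimpleGraph.compl_adj, SimpleGraph.sum_adj, SimpleGraph.compl_adj, ne_eq,
    Sum.inr.injEq, not_and, not_not]
  constructor
  · rintro ⟨h, h2⟩; exact h2 (by simpa using h)
  · intro h; exact ⟨by simp [G2.ne_of_adj h], fun _ => h⟩

lemma gJoin_adj_lr (i : Fin n1) (j : Fin n2) :
    (gJoin G1 G2).Adj (Sum.inl i) (Sum.inr j) := by
  simp [gJoin, SimpleGraph.compl_adj, SimpleGraph.sum_adj]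

lemma gJoin_adj_rl (i : Fin n2) (j : Fin n1) :
    (gJoin G1 G2).Adj (Sum.inr i) (Sum.inl j) := by
  simp [gJoin, SimpleGraph.compl_adj, SimpleGraph.sum_adj]

lemma gJoin_nbhd_sum_l (i : Fin n1) (f : Fin n1 ⊕ Fin n2 → ℝ) :
    ∑ u ∈ (gJoin G1 G2).neighborFinset (Sum.inl i), f u
      = (∑ j, if G1.Adj i j then f (Sum.inl j) else 0) + ∑ k, f (Sum.inr k) := by
  rw [SimpleGraph.neighborFinset_eq_filter, Finset.sum_filter, Fintype.sum_sum_type]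
  simp [gJoin_adj_ll, gJoin_adj_lr]

lemma gJoin_nbhd_sum_r (i : Fin n2) (f : Fin n1 ⊕ Fin n2 → ℝ) :
    ∑ u ∈ (gJoin G1 G2).neighborFinset (Sum.inr i), f u
      = (∑ j, f (Sum.inl j)) + ∑ k, if G2.Adj i k then f (Sum.inr k) else 0 := by
  rw [SimpleGraph.neighborFinset_eq_filter, Finset.sum_filter, Fintype.sum_sum_type]
  simp [gJoin_adj_rr, gJoin_adj_rl]

end aux

/-- For `G1` an `r1`-regular graph on `n1` vertices, `G2` an
`r2`-regular graph on `n2` vertices and `G = G1 ∨ G2` their join, the `Q`-coronal of `G`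
(the sum of all entries of `(lam I - Q)⁻¹`, for `lam` not an eigenvalue of `Q` and
avoiding the pole of the displayed rational function) equals
`((lam - n2 - 2r1) n2 + (lam - n1 - 2r2) n1 + 2 n1 n2) /
  ((lam - n2 - 2r1)(lam - n1 - 2r2) - n1 n2)`. -/
theorem coronal_join_regular {n1 n2 r1 r2 : ℕ}
    (G1 : SimpleGraph (Fin n1)) (G2 : SimpleGraph (Fin n2))
    [DecidableRel G1.Adj] [DecidableRel G2.Adj]
    (h1 : G1.IsRegularOfDegree r1) (h2 : G2.IsRegularOfDegree r2) (lam : ℝ)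
    (hreg : (lam • (1 : Matrix (Fin n1 ⊕ Fin n2) (Fin n1 ⊕ Fin n2) ℝ) -
        signlessLaplacian (gJoin G1 G2)).det ≠ 0)
    (hden : (lam - n2 - 2 * r1) * (lam - n1 - 2 * r2) - (n1 : ℝ) * n2 ≠ 0) :
    ∑ i, ∑ j, (lam • (1 : Matrix (Fin n1 ⊕ Fin n2) (Fin n1 ⊕ Fin n2) ℝ) -
        signlessLaplacian (gJoin G1 G2))⁻¹ i j =
      ((lam - n2 - 2 * r1) * n2 + (lam - n1 - 2 * r2) * n1 + 2 * n1 * n2) /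
        ((lam - n2 - 2 * r1) * (lam - n1 - 2 * r2) - n1 * n2) := by
  classical
  set M : Matrix (Fin n1 ⊕ Fin n2) (Fin n1 ⊕ Fin n2) ℝ :=
    lam • (1 : Matrix (Fin n1 ⊕ Fin n2) (Fin n1 ⊕ Fin n2) ℝ) -
      signlessLaplacian (gJoin G1 G2) with hMdef
  set D : ℝ := (lam - n2 - 2 * r1) * (lam - n1 - 2 * r2) - (n1 : ℝ) * n2 with hD
  set a : ℝ := ((lam - n1 - 2 * r2) + n2) / D with ha
  set b : ℝ := ((lam - n2 - 2 * r1) + n1) / D with hb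
  set x : Fin n1 ⊕ Fin n2 → ℝ := Sum.elim (fun _ => a) (fun _ => b) with hx
  -- degrees in the join
  have hdegl : ∀ i : Fin n1, ((gJoin G1 G2).degree (Sum.inl i) : ℝ) = r1 + n2 := by
    intro i
    have : ((gJoin G1 G2).degree (Sum.inl i) : ℝ)
        = ∑ u ∈ (gJoin G1 G2).neighborFinset (Sum.inl i), (1 : ℝ) := by
      rw [Finset.sum_const, SimpleGraph.degree]; simp
    rw [this, gJoin_nbhd_sum_l]
    have : (∑ j, if G1.Adj i j then (1:ℝ) else 0) = (G1.degree i : ℝ) := by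
      rw [SimpleGraph.degree, SimpleGraph.neighborFinset_eq_filter]
      simp [Finset.sum_ite]
    rw [this, h1 i]
    simp
  have hdegr : ∀ i : Fin n2, ((gJoin G1 G2).degree (Sum.inr i) : ℝ) = r2 + n1 := by
    intro i
    have : ((gJoin G1 G2).degree (Sum.inr i) : ℝ)
        = ∑ u ∈ (gJoin G1 G2).neighborFinset (Sum.inr i), (1 : ℝ) := by
      rw [Finset.sum_const, SimpleGraph.degree]; simp
    rw [this, gJoin_nbhd_sum_r]
    have : (∑ k, if G2.Adj i k then (1:ℝ) else 0) = (G2.degree i : ℝ) := by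
      rw [SimpleGraph.degree, SimpleGraph.neighborFinset_eq_filter]
      simp [Finset.sum_ite]
    rw [this, h2 i]
    simp; ring
  -- M *ᵥ x = 1
  have hMx : M *ᵥ x = fun _ => (1 : ℝ) := by
    funext v
    have hQ : (signlessLaplacian (gJoin G1 G2) *ᵥ x) v
        = ((gJoin G1 G2).degree v : ℝ) * x v
          + ∑ u ∈ (gJoin G1 G2).neighborFinset v, x u := by
      simp [signlessLaplacian, add_mulVec, mulVec_diagonal,
        SimpleGraph.adjMatrix_mulVec_apply]
    have hM : (M *ᵥ x) v = lam * x v - (signlessLaplacian (gJoin G1 G2) *ᵥ x) v := by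
      rw [hMdef, sub_mulVec]
      simp [smul_mulVec, one_mulVec]
    have haux1 : ∀ i : Fin n1, (∑ j, if G1.Adj i j then a else 0) = r1 * a := by
      intro i
      rw [Finset.sum_ite, Finset.sum_const, Finset.sum_const]
      have : (Finset.univ.filter (G1.Adj i)).card = r1 := by
        rw [← SimpleGraph.neighborFinset_eq_filter]; exact h1 i
      simp [this, nsmul_eq_mul]
    have haux2 : ∀ i : Fin n2, (∑ k, if G2.Adj i k then b else 0) = r2 * b := by
      intro i
      rw [Finset.sum_ite, Finset.sum_const, Finset.sum_const]
      have : (Finset.univ.filter (G2.Adj i)).card = r2 := by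
        rw [← SimpleGraph.neighborFinset_eq_filter]; exact h2 i
      simp [this, nsmul_eq_mul]
    cases v with
    | inl i =>
      rw [hM, hQ, hdegl i, gJoin_nbhd_sum_l]
      simp only [hx, Sum.elim_inl, Sum.elim_inr, Finset.sum_const, Finset.card_univ,
        Fintype.card_fin, nsmul_eq_mul]
      rw [haux1 i]
      have : lam * a - ((↑r1 + ↑n2) * a + (↑r1 * a + ↑n2 * b))
          = (lam - n2 - 2*r1) * a - n2 * b := by ring
      rw [this, ha, hb]
      field_simp
      ring
    | inr i =>
      rw [hM, hQ, hdegr i, gJoin_nbhd_sum_r]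
      simp only [hx, Sum.elim_inl, Sum.elim_inr, Finset.sum_const, Finset.card_univ,
        Fintype.card_fin, nsmul_eq_mul]
      rw [haux2 i]
      have : lam * b - ((↑r2 + ↑n1) * b + (↑n1 * a + ↑r2 * b))
          = (lam - n1 - 2*r2) * b - n1 * a := by ring
      rw [this, ha, hb]
      field_simp
      ring
  -- invert
  have hunit : IsUnit M.det := isUnit_iff_ne_zero.mpr hreg
  have hinv : M⁻¹ *ᵥ (fun _ => (1:ℝ)) = x := by
    rw [← hMx, mulVec_mulVec, Matrix.nonsing_inv_mul M hunit, one_mulVec]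
  have hsum : ∑ i, ∑ j, M⁻¹ i j = ∑ i, (M⁻¹ *ᵥ (fun _ => (1:ℝ))) i := by
    simp [mulVec, dotProduct]
  rw [hsum, hinv, hx, Fintype.sum_sum_type]
  simp only [Sum.elim_inl, Sum.elim_inr, Finset.sum_const, Finset.card_univ, Fintype.card_fin,
    nsmul_eq_mul]
  rw [ha, hb, hD]
  field_simp
  ring
end

section
/- Let G = K_{n_1,...,n_k} be the complete multipartite graph with parts of sizes n_1,...,n_k and n = n_1 + ... + n_k vertices. Then its Q-coronal satisfies Γ_Q(λ) = ((Σ_{i=1}^k n_i/(λ - n + 2n_i))^{-1} - 1)^{-1}, for λ avoiding poles. -/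
open Matrix BigOperators

instance {k : ℕ} (m : Fin k → ℕ) :
    DecidableRel (SimpleGraph.completeMultipartiteGraph (fun i => Fin (m i))).Adj := fun x y =>
  inferInstanceAs (Decidable (x.1 ≠ y.1))

section Aux

variable {k : ℕ} (m : Fin k → ℕ)

private lemma neighbor_sum (v : (i : Fin k) × Fin (m i)) (f : Fin k → ℝ) :
    ∑ w ∈ (SimpleGraph.completeMultipartiteGraph (fun i => Fin (m i))).neighborFinset v, f w.1
      = (∑ j, (m j : ℝ) * f j) - m v.1 * f v.1 := by
  rw [SimpleGraph.neighborFinset_eq_filter, Finset.sum_filter]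
  have : ∑ w : (i : Fin k) × Fin (m i),
      (if (SimpleGraph.completeMultipartiteGraph (fun i => Fin (m i))).Adj v w then f w.1 else 0)
      = ∑ j, ∑ _b : Fin (m j), (if v.1 = j then 0 else f j) := by
    rw [← Finset.univ_sigma_univ, Finset.sum_sigma]
    refine Fintype.sum_congr _ _ fun w => ?_
    by_cases h : v.1 = w.1 <;> simp [SimpleGraph.comap_adj, h]
  rw [this]
  have h2 : ∀ j : Fin k, (∑ _b : Fin (m j), (if v.1 = j then 0 else f j))
      = (m j : ℝ) * f j - (if j = v.1 then (m j : ℝ) * f j else 0) := by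
    intro j
    rcases eq_or_ne v.1 j with h | h
    · simp [h, Finset.sum_const]
    · simp [h, Finset.sum_const, Ne.symm h, mul_comm]
  rw [Finset.sum_congr rfl fun j _ => h2 j, Finset.sum_sub_distrib,
    Finset.sum_ite_eq' Finset.univ v.1]
  simp

private lemma degree_eq (v : (i : Fin k) × Fin (m i)) :
    ((SimpleGraph.completeMultipartiteGraph (fun i => Fin (m i))).degree v : ℝ)
      = (∑ j, (m j : ℝ)) - m v.1 := by
  have h0 : ((SimpleGraph.completeMultipartiteGraph (fun i => Fin (m i))).degree v : ℝ)
      = ∑ _w ∈ (SimpleGraph.completeMultipartiteGraph (fun i => Fin (m i))).neighborFinset v,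
          (1 : ℝ) := by
    rw [SimpleGraph.degree, Finset.card_eq_sum_ones]
    push_cast
    rfl
  rw [h0, neighbor_sum m v (fun _ => (1 : ℝ))]
  simp

private lemma key (lam : ℝ) (c : Fin k → ℝ) (v : (i : Fin k) × Fin (m i)) :
    ((lam • (1 : Matrix ((i : Fin k) × Fin (m i)) ((i : Fin k) × Fin (m i)) ℝ) -
        signlessLaplacian (SimpleGraph.completeMultipartiteGraph (fun i => Fin (m i)))) *ᵥ
        (fun w => c w.1)) v
      = (lam - (∑ j, (m j : ℝ)) + 2 * m v.1) * c v.1 - ∑ j, (m j : ℝ) * c j := by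
  rw [sub_mulVec, smul_mulVec, one_mulVec, signlessLaplacian, add_mulVec]
  simp only [Pi.sub_apply, Pi.add_apply, Pi.smul_apply, smul_eq_mul, mulVec_diagonal,
    SimpleGraph.adjMatrix_mulVec_apply]
  rw [neighbor_sum m v c, degree_eq m v]
  ring

end Aux

/-- Let `G = K_{m 1, ..., m k}` be the complete multipartite graph with
parts of sizes `m i` and `n = Σ m i` vertices, and `Q` its signless Laplacian.  For `lam`
not an eigenvalue of `Q` and avoiding poles of the displayed expression, the `Q`-coronal
satisfies `Γ_Q(lam) = ((Σ_i m i / (lam - n + 2 m i))⁻¹ - 1)⁻¹`. -/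
theorem coronal_completeMultipartite {k : ℕ} (m : Fin k → ℕ) (lam : ℝ)
    (hreg : (lam • (1 : Matrix ((i : Fin k) × Fin (m i)) ((i : Fin k) × Fin (m i)) ℝ) -
        signlessLaplacian (SimpleGraph.completeMultipartiteGraph (fun i => Fin (m i)))).det ≠ 0)
    (hpole : ∀ i, lam - (∑ i, (m i : ℝ)) + 2 * m i ≠ 0)
    (hsum : (∑ i, (m i : ℝ) / (lam - (∑ i, (m i : ℝ)) + 2 * m i)) ≠ 0) :
    ∑ i, ∑ j,
        (lam • (1 : Matrix ((i : Fin k) × Fin (m i)) ((i : Fin k) × Fin (m i)) ℝ) -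
          signlessLaplacian (SimpleGraph.completeMultipartiteGraph (fun i => Fin (m i))))⁻¹ i j =
      ((∑ i, (m i : ℝ) / (lam - (∑ i, (m i : ℝ)) + 2 * m i))⁻¹ - 1)⁻¹ := by
  set n : ℝ := ∑ i, (m i : ℝ) with hn
  set T : ℝ := ∑ i, (m i : ℝ) / (lam - n + 2 * m i) with hT
  set M : Matrix ((i : Fin k) × Fin (m i)) ((i : Fin k) × Fin (m i)) ℝ :=
    lam • (1 : Matrix ((i : Fin k) × Fin (m i)) ((i : Fin k) × Fin (m i)) ℝ) -
      signlessLaplacian (SimpleGraph.completeMultipartiteGraph (fun i => Fin (m i))) with hM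
  have hMinv : M⁻¹ * M = 1 := Matrix.nonsing_inv_mul M (isUnit_iff_ne_zero.mpr hreg)
  have cancel : ∀ x : ((i : Fin k) × Fin (m i)) → ℝ, M⁻¹ *ᵥ (M *ᵥ x) = x := fun x => by
    rw [Matrix.mulVec_mulVec, hMinv, Matrix.one_mulVec]
  have hT1 : T ≠ 1 := by
    intro h1
    set c : Fin k → ℝ := fun i => (lam - n + 2 * m i)⁻¹ with hc
    have hx : M *ᵥ (fun w => c w.1) = 0 := by
      funext v
      rw [hM, key]
      have hs : ∑ j, (m j : ℝ) * c j = T := by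
        rw [hT]
        exact Finset.sum_congr rfl fun j _ => (div_eq_mul_inv _ _).symm
      rw [hs, h1, hc, mul_inv_cancel₀ (hpole v.1)]
      simp
    have hx0 : (fun w : (i : Fin k) × Fin (m i) => c w.1) = 0 := by
      rw [← cancel (fun w => c w.1), hx, Matrix.mulVec_zero]
    obtain ⟨i, hi⟩ : ∃ i, (m i : ℝ) / (lam - n + 2 * m i) ≠ 0 := by
      by_contra h
      push_neg at h
      exact hsum (Finset.sum_eq_zero fun i _ => h i)
    have hmi : (m i : ℕ) ≠ 0 := by
      intro h0
      rw [h0] at hi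
      simp at hi
    have hci : c i ≠ 0 := inv_ne_zero (hpole i)
    have := congrFun hx0 ⟨i, ⟨0, Nat.pos_of_ne_zero hmi⟩⟩
    exact hci this
  have h1T : (1 : ℝ) - T ≠ 0 := sub_ne_zero.mpr (Ne.symm hT1)
  set c : Fin k → ℝ := fun i => (1 - T)⁻¹ * (lam - n + 2 * m i)⁻¹ with hc
  have hs : ∑ j, (m j : ℝ) * c j = (1 - T)⁻¹ * T := by
    rw [hT, Finset.mul_sum]
    exact Finset.sum_congr rfl fun j _ => by rw [hc, ← hT]; field_simp
  have hx : M *ᵥ (fun w => c w.1) = fun _ => (1 : ℝ) := by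
    funext v
    rw [hM, key, hs, hc]
    rw [show (lam - n + 2 * (m v.1 : ℝ)) * ((1 - T)⁻¹ * (lam - n + 2 * (m v.1 : ℝ))⁻¹)
        = (1 - T)⁻¹ * ((lam - n + 2 * (m v.1 : ℝ)) * (lam - n + 2 * (m v.1 : ℝ))⁻¹) by ring,
      mul_inv_cancel₀ (hpole v.1)]
    field_simp
  have hxeq : M⁻¹ *ᵥ (fun _ => (1 : ℝ)) = fun w => c w.1 := by
    rw [← hx, cancel]
  calc ∑ i, ∑ j, M⁻¹ i j
      = ∑ v : (i : Fin k) × Fin (m i), (M⁻¹ *ᵥ fun _ => (1 : ℝ)) v := by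
        simp [Matrix.mulVec, dotProduct]
    _ = ∑ v : (i : Fin k) × Fin (m i), c v.1 := by rw [hxeq]
    _ = ∑ i, (m i : ℝ) * c i := by
        rw [← Finset.univ_sigma_univ, Finset.sum_sigma]
        exact Finset.sum_congr rfl fun i _ => by
          simp [Finset.sum_const, mul_comm]
    _ = (1 - T)⁻¹ * T := hs
    _ = (T⁻¹ - 1)⁻¹ := by
        have h : T⁻¹ - 1 = (1 - T) / T := by field_simp
        rw [h, inv_div, div_eq_mul_inv, mul_comm]
end

section
/- Let G_1 and G_2 be simple graphs on n_1 and n_2 vertices with signless Laplacians Q_1 and Q_2, and let G = G_1 ∘ G_2 be the corona. Then the signless Laplacian characteristic polynomial of G is f_Q(λ) = (f_{Q_2}(λ-1))^{n_1} · f_{Q_1}(λ - n_2 - Γ_{Q_2}(λ-1)), where Γ_{Q_2} is the Q_2-coronal of G_2. -/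
open Matrix BigOperators

/-- The corona `G1 ∘ G2`: one copy of `G1` together with `n1` copies of `G2`, where the
`i`-th vertex of `G1` is joined to every vertex of the `i`-th copy of `G2`. -/
def corona {α β : Type*} (G1 : SimpleGraph α) (G2 : SimpleGraph β) :
    SimpleGraph (α ⊕ α × β) where
  Adj x y := match x, y with
    | Sum.inl a, Sum.inl b => G1.Adj a b
    | Sum.inl a, Sum.inr (b, _) => a = b
    | Sum.inr (a, _), Sum.inl b => a = b
    | Sum.inr (a, u), Sum.inr (b, v) => a = b ∧ G2.Adj u v
  symm := ⟨by
    rintro (a | ⟨a, u⟩) (b | ⟨b, v⟩) h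
    · exact G1.adj_symm h
    · exact h.symm
    · exact h.symm
    · exact ⟨h.1.symm, G2.adj_symm h.2⟩⟩
  loopless := ⟨by
    rintro (a | ⟨a, u⟩) h
    · exact G1.irrefl h
    · exact G2.irrefl h.2⟩

instance {α β : Type*} [DecidableEq α] (G1 : SimpleGraph α) (G2 : SimpleGraph β)
    [DecidableRel G1.Adj] [DecidableRel G2.Adj] : DecidableRel (corona G1 G2).Adj :=
  fun x y =>
  match x, y with
  | Sum.inl a, Sum.inl b => inferInstanceAs (Decidable (G1.Adj a b))
  | Sum.inl a, Sum.inr (b, _) => inferInstanceAs (Decidable (a = b))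
  | Sum.inr (a, _), Sum.inl b => inferInstanceAs (Decidable (a = b))
  | Sum.inr (a, u), Sum.inr (b, v) => inferInstanceAs (Decidable (a = b ∧ G2.Adj u v))

set_option linter.unusedSectionVars false
section Aux
variable {n1 n2 : ℕ} (G1 : SimpleGraph (Fin n1)) (G2 : SimpleGraph (Fin n2))
  [DecidableRel G1.Adj] [DecidableRel G2.Adj]

lemma corona_adj_ll (a b : Fin n1) :
    (corona G1 G2).Adj (Sum.inl a) (Sum.inl b) ↔ G1.Adj a b := Iff.rfl
lemma corona_adj_lr (a : Fin n1) (p : Fin n1 × Fin n2) :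
    (corona G1 G2).Adj (Sum.inl a) (Sum.inr p) ↔ a = p.1 := Iff.rfl
lemma corona_adj_rl (p : Fin n1 × Fin n2) (b : Fin n1) :
    (corona G1 G2).Adj (Sum.inr p) (Sum.inl b) ↔ p.1 = b := Iff.rfl
lemma corona_adj_rr (p q : Fin n1 × Fin n2) :
    (corona G1 G2).Adj (Sum.inr p) (Sum.inr q) ↔ p.1 = q.1 ∧ G2.Adj p.2 q.2 := Iff.rfl

lemma corona_degree_inl (a : Fin n1) :
    (corona G1 G2).degree (Sum.inl a) = G1.degree a + n2 := by
  classical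
  simp only [SimpleGraph.degree, SimpleGraph.neighborFinset_eq_filter, Finset.card_filter]
  rw [Fintype.sum_sum_type]
  simp only [corona_adj_ll, corona_adj_lr, Fintype.sum_prod_type]
  congr 1
  simp [apply_ite Finset.card, Finset.sum_ite_eq, Finset.card_univ]

lemma corona_degree_inr (p : Fin n1 × Fin n2) :
    (corona G1 G2).degree (Sum.inr p) = G2.degree p.2 + 1 := by
  classical
  simp only [SimpleGraph.degree, SimpleGraph.neighborFinset_eq_filter, Finset.card_filter]
  rw [Fintype.sum_sum_type]
  simp only [corona_adj_rl, corona_adj_rr, Fintype.sum_prod_type]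
  rw [add_comm]
  congr 1
  · simp only [ite_and]
    rw [show (∑ x : Fin n1, ∑ y : Fin n2, if p.1 = x then (if G2.Adj p.2 y then (1:ℕ) else 0) else 0)
        = ∑ x : Fin n1, if p.1 = x then (∑ y : Fin n2, if G2.Adj p.2 y then (1:ℕ) else 0) else 0 from
      Finset.sum_congr rfl fun x _ => by split <;> simp]
    rw [Finset.sum_ite_eq]
    simp only [Finset.mem_univ, if_true, Finset.card_filter]
  · simp [Finset.sum_ite_eq]

end Aux

/-- For graphs `G1`, `G2` on `n1`, `n2` vertices with signless
Laplacians `Q1`, `Q2` and corona `G = G1 ∘ G2`, whenever `lam - 1` is not an eigenvalue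
of `Q2`, the signless Laplacian characteristic polynomial of `G` is
`f_Q(lam) = f_{Q2}(lam - 1)^{n1} * f_{Q1}(lam - n2 - Γ_{Q2}(lam - 1))`, where
`Γ_{Q2}` is the `Q2`-coronal of `G2` (the sum of all entries of `((lam-1) I - Q2)⁻¹`). -/
theorem charpoly_corona {n1 n2 : ℕ}
    (G1 : SimpleGraph (Fin n1)) (G2 : SimpleGraph (Fin n2))
    [DecidableRel G1.Adj] [DecidableRel G2.Adj] (lam : ℝ)
    (h2 : (((lam - 1) • (1 : Matrix (Fin n2) (Fin n2) ℝ)) - signlessLaplacian G2).det ≠ 0) :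
    (lam • (1 : Matrix (Fin n1 ⊕ Fin n1 × Fin n2) (Fin n1 ⊕ Fin n1 × Fin n2) ℝ) -
        signlessLaplacian (corona G1 G2)).det =
      ((((lam - 1) • (1 : Matrix (Fin n2) (Fin n2) ℝ)) - signlessLaplacian G2).det) ^ n1 *
        (((lam - n2 -
            ∑ i, ∑ j,
              (((lam - 1) • (1 : Matrix (Fin n2) (Fin n2) ℝ)) -
                  signlessLaplacian G2)⁻¹ i j) •
            (1 : Matrix (Fin n1) (Fin n1) ℝ) - signlessLaplacian G1).det) := by
  classical
  set S : Matrix (Fin n2) (Fin n2) ℝ :=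
    ((lam - 1) • (1 : Matrix (Fin n2) (Fin n2) ℝ)) - signlessLaplacian G2 with hSdef
  have hSu : IsUnit S.det := isUnit_iff_ne_zero.mpr h2
  have hS1 : S * S⁻¹ = 1 := Matrix.mul_nonsing_inv S hSu
  set A : Matrix (Fin n1) (Fin n1) ℝ :=
    (lam - (n2 : ℝ)) • 1 - signlessLaplacian G1 with hA
  set B : Matrix (Fin n1) (Fin n1 × Fin n2) ℝ :=
    Matrix.of fun a p => if a = p.1 then (-1 : ℝ) else 0 with hB
  set C : Matrix (Fin n1 × Fin n2) (Fin n1) ℝ :=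
    Matrix.of fun p b => if p.1 = b then (-1 : ℝ) else 0 with hC
  set D : Matrix (Fin n1 × Fin n2) (Fin n1 × Fin n2) ℝ :=
    (Matrix.blockDiagonal fun _ : Fin n1 => S).submatrix
      (Equiv.prodComm (Fin n1) (Fin n2)) (Equiv.prodComm (Fin n1) (Fin n2)) with hD
  set E : Matrix (Fin n1 × Fin n2) (Fin n1 × Fin n2) ℝ :=
    (Matrix.blockDiagonal fun _ : Fin n1 => S⁻¹).submatrix
      (Equiv.prodComm (Fin n1) (Fin n2)) (Equiv.prodComm (Fin n1) (Fin n2)) with hE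
  have hbd1 : (Matrix.blockDiagonal fun _ : Fin n1 => (1 : Matrix (Fin n2) (Fin n2) ℝ)).submatrix
      (Equiv.prodComm (Fin n1) (Fin n2)) (Equiv.prodComm (Fin n1) (Fin n2)) = 1 := by
    have h1 : (fun _ : Fin n1 => (1 : Matrix (Fin n2) (Fin n2) ℝ)) = 1 := rfl
    rw [h1, Matrix.blockDiagonal_one]
    exact Matrix.submatrix_one_equiv _
  have hDE : D * E = 1 := by
    rw [hD, hE, Matrix.submatrix_mul_equiv, ← Matrix.blockDiagonal_mul]
    simp only [hS1]
    exact hbd1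
  have hED : E * D = 1 := by
    rw [hD, hE, Matrix.submatrix_mul_equiv, ← Matrix.blockDiagonal_mul]
    simp only [Matrix.nonsing_inv_mul S hSu]
    exact hbd1
  haveI : Invertible D := ⟨E, hED, hDE⟩
  have hM : lam • (1 : Matrix (Fin n1 ⊕ Fin n1 × Fin n2) (Fin n1 ⊕ Fin n1 × Fin n2) ℝ) -
      signlessLaplacian (corona G1 G2) = Matrix.fromBlocks A B C D := by
    ext i j
    rcases i with a | p <;> rcases j with b | q
    · simp only [Matrix.sub_apply, Matrix.smul_apply, Matrix.one_apply, smul_eq_mul,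
        signlessLaplacian, Matrix.add_apply, Matrix.diagonal_apply,
        SimpleGraph.adjMatrix_apply, Matrix.fromBlocks_apply₁₁, hA,
        corona_adj_ll, corona_degree_inl, Sum.inl.injEq]
      by_cases h : a = b
      · subst h; push_cast; simp; ring
      · simp [h]
    · simp only [Matrix.sub_apply, Matrix.smul_apply, Matrix.one_apply, smul_eq_mul,
        signlessLaplacian, Matrix.add_apply, Matrix.diagonal_apply,
        SimpleGraph.adjMatrix_apply, Matrix.fromBlocks_apply₁₂, hB, Matrix.of_apply,
        corona_adj_lr]
      by_cases h : a = q.1 <;> simp [h]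
    · simp only [Matrix.sub_apply, Matrix.smul_apply, Matrix.one_apply, smul_eq_mul,
        signlessLaplacian, Matrix.add_apply, Matrix.diagonal_apply,
        SimpleGraph.adjMatrix_apply, Matrix.fromBlocks_apply₂₁, hC, Matrix.of_apply,
        corona_adj_rl]
      by_cases h : p.1 = b <;> simp [h]
    · simp only [Matrix.sub_apply, Matrix.smul_apply, Matrix.one_apply, smul_eq_mul,
        signlessLaplacian, Matrix.add_apply, Matrix.diagonal_apply,
        SimpleGraph.adjMatrix_apply, Matrix.fromBlocks_apply₂₂, hD,
        Matrix.submatrix_apply, Matrix.blockDiagonal_apply, Equiv.prodComm_apply,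
        Prod.fst_swap, Prod.snd_swap, corona_adj_rr, corona_degree_inr, hSdef]
      by_cases h : p = q
      · subst h
        push_cast
        simp [Matrix.sub_apply, Matrix.smul_apply, Matrix.one_apply,
          signlessLaplacian, Matrix.add_apply, Matrix.diagonal_apply,
          SimpleGraph.adjMatrix_apply]
        ring
      · by_cases h1 : p.1 = q.1
        · have h2' : p.2 ≠ q.2 := fun h2' => h (Prod.ext h1 h2')
          simp [h, h1, h2', Matrix.sub_apply, Matrix.smul_apply, Matrix.one_apply,
            signlessLaplacian, Matrix.add_apply, Matrix.diagonal_apply,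
            SimpleGraph.adjMatrix_apply]
        · simp [h, h1]
  have hinv : ⅟D = E := (Matrix.invOf_eq_nonsing_inv D).trans (Matrix.inv_eq_right_inv hDE)
  have hBEC : B * ⅟D * C =
      (∑ i, ∑ j, S⁻¹ i j) • (1 : Matrix (Fin n1) (Fin n1) ℝ) := by
    rw [hinv]
    ext a b
    simp only [Matrix.mul_apply, hB, hC, hE, Matrix.of_apply, Matrix.submatrix_apply,
      Matrix.blockDiagonal_apply, Equiv.prodComm_apply, Prod.fst_swap, Prod.snd_swap,
      Fintype.sum_prod_type, Matrix.smul_apply, Matrix.one_apply, smul_eq_mul]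
    rw [show (∑ c : Fin n1, ∑ w : Fin n2,
        (∑ d : Fin n1, ∑ v : Fin n2,
          (if a = d then (-1 : ℝ) else 0) * (if d = c then S⁻¹ v w else 0)) *
          (if c = b then (-1 : ℝ) else 0))
      = ∑ c : Fin n1, ∑ w : Fin n2,
          (if a = c then -(∑ v : Fin n2, S⁻¹ v w) else 0) * (if c = b then (-1:ℝ) else 0) from ?_]
    · rw [show (∑ c : Fin n1, ∑ w : Fin n2,
          (if a = c then -(∑ v : Fin n2, S⁻¹ v w) else 0) * (if c = b then (-1:ℝ) else 0))
        = ∑ c : Fin n1, if a = c then (if c = b then (∑ w : Fin n2, ∑ v : Fin n2, S⁻¹ v w) else 0) else 0 from ?_]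
      · rw [Finset.sum_ite_eq]
        by_cases hab : a = b
        · subst hab
          rw [Finset.sum_comm]
          simp
        · simp [hab]
      · refine Finset.sum_congr rfl fun c _ => ?_
        by_cases h1 : a = c
        · subst h1
          by_cases h2 : a = b <;> simp [h2]
        · simp [h1]
    · refine Finset.sum_congr rfl fun c _ => Finset.sum_congr rfl fun w _ => ?_
      congr 1
      rw [show (∑ d : Fin n1, ∑ v : Fin n2,
          (if a = d then (-1 : ℝ) else 0) * (if d = c then S⁻¹ v w else 0))
        = ∑ d : Fin n1, if a = d then (if d = c then -(∑ v : Fin n2, S⁻¹ v w) else 0) else 0 from ?_]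
      · rw [Finset.sum_ite_eq]
        simp
      · refine Finset.sum_congr rfl fun d _ => ?_
        by_cases h1 : a = d
        · subst h1
          by_cases h2 : a = c <;> simp [h2, Finset.mul_sum]
        · simp [h1]
  have hDdet : D.det = S.det ^ n1 := by
    rw [hD, Matrix.det_submatrix_equiv_self, Matrix.det_blockDiagonal]
    simp
  rw [hM, Matrix.det_fromBlocks₂₂, hDdet, hBEC, hA]
  congr 2
  module
end
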